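/- Let d₁ ≥ 2 be an integer, d₂ ∈ {2, 9}, 0 < t* ≤ 1.5, and let L = L_{d₁d₂}. Suppose F : [0, t*] → ℝ⁵ is continuously differentiable and μ : [0, t*] → ℝ⁵ is continuous with μ(0) = 0, differentiable on (0, t*], and satisfies μ'(t) = (1/t)·L·μ(t) + F(t) for all t ∈ (0, t*]. Then μ is twice differentiable on (0, t*] and sup_{[0,t*]} |μ| + sup_{(0,t*]} |μ'| + sup_{(0,t*]} |μ''| ≤ 600 · (sup_{[0,t*]} |F| + sup_{[0,t*]} |F'|). -/

import Mathlib

noncomputable section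

/-- The 5×5 matrix `L_{d₁d₂}`: zero except `(L)₂₂ = −d₂`, `(L)₃₂ = 2`, `(L)₃₃ = −2`
(rows and columns indexed 1,…,5; here indexed `0,…,4`). -/
def Lmat (d₁ d₂ : ℕ) : Matrix (Fin 5) (Fin 5) ℝ :=
  Matrix.of fun i j =>
    if i = 1 ∧ j = 1 then -(d₂ : ℝ)
    else if i = 2 ∧ j = 1 then 2
    else if i = 2 ∧ j = 2 then -2
    else 0

/-- The action of `L_{d₁d₂}` on `ℝ⁵` (with the Euclidean norm). -/
def Lop (d₁ d₂ : ℕ) (x : EuclideanSpace ℝ (Fin 5)) : EuclideanSpace ℝ (Fin 5) :=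
  WithLp.toLp 2 ((Lmat d₁ d₂).mulVec x)

open Set Filter Topology

lemma Lop_apply (d₁ d₂ : ℕ) (x : EuclideanSpace ℝ (Fin 5)) :
    Lop d₁ d₂ x = WithLp.toLp 2 ![0, -(d₂:ℝ) * x 1, 2 * x 1 - 2 * x 2, 0, 0] := by
  ext i
  fin_cases i <;>
    simp [Lop, Lmat, Matrix.mulVec, dotProduct, Fin.sum_univ_five, Fin.isValue] <;> ring

lemma Lop_add' (d₁ d₂ : ℕ) (x y : EuclideanSpace ℝ (Fin 5)) :
    Lop d₁ d₂ (x + y) = Lop d₁ d₂ x + Lop d₁ d₂ y :=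
  by simp [Lop, Matrix.mulVec_add]

lemma Lop_smul' (d₁ d₂ : ℕ) (r : ℝ) (x : EuclideanSpace ℝ (Fin 5)) :
    Lop d₁ d₂ (r • x) = r • Lop d₁ d₂ x :=
  by simp [Lop, Matrix.mulVec_smul]

/-- `Lop` as a continuous linear map. -/
def LL (d₁ d₂ : ℕ) : EuclideanSpace ℝ (Fin 5) →L[ℝ] EuclideanSpace ℝ (Fin 5) :=
  LinearMap.toContinuousLinearMap
    { toFun := Lop d₁ d₂
      map_add' := Lop_add' d₁ d₂
      map_smul' := Lop_smul' d₁ d₂ }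

@[simp] lemma LL_apply (d₁ d₂ : ℕ) (x : EuclideanSpace ℝ (Fin 5)) :
    LL d₁ d₂ x = Lop d₁ d₂ x := rfl

lemma Lop_norm (d₁ d₂ : ℕ) (hd₂ : (d₂:ℝ) ≤ 9) (x : EuclideanSpace ℝ (Fin 5)) :
    ‖Lop d₁ d₂ x‖ ≤ 10 * ‖x‖ := by
  have hd0 : (0:ℝ) ≤ d₂ := Nat.cast_nonneg _
  rw [Lop_apply, EuclideanSpace.norm_eq, EuclideanSpace.norm_eq]
  have h : Real.sqrt (∑ i, ‖(![0, -(d₂:ℝ) * x 1, 2 * x 1 - 2 * x 2, 0, 0]) i‖ ^ 2)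
      ≤ Real.sqrt ((10:ℝ)^2 * ∑ i, ‖x i‖ ^ 2) := by
    apply Real.sqrt_le_sqrt
    simp only [Fin.sum_univ_five, Matrix.cons_val_zero, Matrix.cons_val_one, Matrix.head_cons,
      Matrix.cons_val_two, Matrix.tail_cons, Matrix.cons_val_three, Matrix.cons_val_four,
      Real.norm_eq_abs, sq_abs]
    nlinarith [sq_nonneg (x 0), sq_nonneg (x 1), sq_nonneg (x 2), sq_nonneg (x 3), sq_nonneg (x 4),
      sq_nonneg (x 1 + x 2), sq_nonneg (x 1 - x 2), sq_nonneg ((9 - (d₂:ℝ)) * x 1)]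
  rwa [Real.sqrt_mul (by positivity), Real.sqrt_sq (by norm_num)] at h

lemma inner_Lop (d₁ d₂ : ℕ) (hd₂ : (2:ℝ) ≤ d₂) (x : EuclideanSpace ℝ (Fin 5)) :
    (inner ℝ x (Lop d₁ d₂ x) : ℝ) ≤ 0 := by
  rw [Lop_apply, PiLp.inner_apply]
  simp only [RCLike.inner_apply, conj_trivial, Fin.sum_univ_five, PiLp.toLp_apply, Matrix.cons_val_zero,
    Matrix.cons_val_one, Matrix.head_cons, Matrix.cons_val_two, Matrix.tail_cons,
    Matrix.cons_val_three, Matrix.cons_val_four]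
  nlinarith [sq_nonneg (x 1 - x 2), sq_nonneg (x 1), sq_nonneg (x 2),
    mul_nonneg (by linarith : (0:ℝ) ≤ (d₂:ℝ) - 2) (sq_nonneg (x 1))]

/-- The vector `a` with `(I - L) a = y`. -/
def avec (d₂ : ℕ) (y : EuclideanSpace ℝ (Fin 5)) : EuclideanSpace ℝ (Fin 5) :=
  WithLp.toLp 2 ![y 0, y 1 / (1 + d₂), (y 2 + 2 * (y 1 / (1 + d₂))) / 3, y 3, y 4]

lemma avec_eq (d₁ d₂ : ℕ) (y : EuclideanSpace ℝ (Fin 5)) :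
    Lop d₁ d₂ (avec d₂ y) - avec d₂ y + y = 0 := by
  have hne : (1 + (d₂:ℝ)) ≠ 0 := by positivity
  ext i
  have h1 : avec d₂ y 1 = y 1 / (1 + d₂) := rfl
  have h2 : avec d₂ y 2 = (y 2 + 2 * (y 1 / (1 + d₂))) / 3 := rfl
  fin_cases i <;>
    simp [Lop_apply, avec, PiLp.toLp_apply, PiLp.add_apply, PiLp.sub_apply, PiLp.zero_apply] <;>
    field_simp <;> ring

lemma deriv_mono_helper {f g f' g' : ℝ → ℝ} {a b : ℝ} (hab : a ≤ b)
    (hfc : ContinuousOn f (Icc a b)) (hgc : ContinuousOn g (Icc a b))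
    (hf : ∀ x ∈ Ioo a b, HasDerivAt f (f' x) x)
    (hg : ∀ x ∈ Ioo a b, HasDerivAt g (g' x) x)
    (hle : ∀ x ∈ Ioo a b, f' x ≤ g' x) : f b - f a ≤ g b - g a := by
  have h : MonotoneOn (fun x => g x - f x) (Icc a b) := by
    apply monotoneOn_of_deriv_nonneg (convex_Icc a b) (hgc.sub hfc)
    · intro x hx
      rw [interior_Icc] at hx
      exact ((hg x hx).sub (hf x hx)).differentiableAt.differentiableWithinAt
    · intro x hx
      rw [interior_Icc] at hx
      rw [((hg x hx).sub (hf x hx)).deriv]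
      linarith [hle x hx]
  have h2 := h (left_mem_Icc.2 hab) (right_mem_Icc.2 hab) hab
  simp only [] at h2
  linarith

section Energy

variable {E : Type*} [NormedAddCommGroup E] [InnerProductSpace ℝ E]

lemma energy_bound (tstar M : ℝ) (hM : 0 ≤ M) (μ μ' : ℝ → E)
    (hμc : ContinuousOn μ (Icc 0 tstar)) (hμ0 : μ 0 = 0)
    (hderiv : ∀ x ∈ Ioo 0 tstar, HasDerivAt μ (μ' x) x)
    (hinner : ∀ x ∈ Ioo 0 tstar, (inner ℝ (μ x) (μ' x) : ℝ) ≤ ‖μ x‖ * M) :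
    ∀ t ∈ Ioc 0 tstar, ‖μ t‖ ≤ M * t := by
  rintro t ⟨ht0, ht1⟩
  apply le_of_forall_pos_le_add
  intro ε hε
  set v : ℝ → ℝ := fun s => (inner ℝ (μ s) (μ s) : ℝ) + ε ^ 2 with hv_def
  have hv : ∀ s, 0 < v s := fun s =>
    add_pos_of_nonneg_of_pos real_inner_self_nonneg (by positivity)
  have hnorm : ∀ s, ‖μ s‖ ≤ Real.sqrt (v s) := by
    intro s
    have h1 : Real.sqrt (‖μ s‖ ^ 2) ≤ Real.sqrt (v s) := by
      apply Real.sqrt_le_sqrt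
      rw [hv_def]
      simp only [real_inner_self_eq_norm_sq]
      nlinarith
    rwa [Real.sqrt_sq (norm_nonneg _)] at h1
  set f : ℝ → ℝ := fun s => Real.sqrt (v s) with hf_def
  have hIccsub : Icc 0 t ⊆ Icc 0 tstar := Icc_subset_Icc le_rfl ht1
  have hfc : ContinuousOn f (Icc 0 t) := by
    apply Real.continuous_sqrt.comp_continuousOn
    exact (((hμc.mono hIccsub).inner (hμc.mono hIccsub)).add continuousOn_const)
  have key : f t - f 0 ≤ M * t - M * 0 := by
    apply deriv_mono_helper (f' := fun x =>
        ((inner ℝ (μ x) (μ' x) : ℝ) + (inner ℝ (μ' x) (μ x) : ℝ)) / (2 * Real.sqrt (v x)))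
      (g' := fun _ => M) ht0.le hfc (continuous_const.mul continuous_id).continuousOn
    · intro x hx
      have hx' : x ∈ Ioo 0 tstar := ⟨hx.1, lt_of_lt_of_le hx.2 ht1⟩
      exact ((HasDerivAt.inner ℝ (hderiv x hx') (hderiv x hx')).add_const (ε ^ 2)).sqrt
        (ne_of_gt (hv x))
    · intro x _
      have h := (hasDerivAt_id x).const_mul M
      rw [mul_one] at h
      exact h
    · intro x hx
      have hx' : x ∈ Ioo 0 tstar := ⟨hx.1, lt_of_lt_of_le hx.2 ht1⟩
      rw [div_le_iff₀ (mul_pos two_pos (Real.sqrt_pos.2 (hv x)))]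
      have h1 := hinner x hx'
      have h2 : (inner ℝ (μ' x) (μ x) : ℝ) = (inner ℝ (μ x) (μ' x) : ℝ) := real_inner_comm _ _
      have h3 := hnorm x
      nlinarith [Real.sqrt_nonneg (v x), hv x, norm_nonneg (μ x)]
  have hf0 : f 0 = ε := by
    simp only [hf_def, hv_def, hμ0, inner_zero_left, zero_add]
    exact Real.sqrt_sq hε.le
  have := hnorm t
  rw [hf0] at key
  linarith

lemma energy_bound2 (tstar K : ℝ) (hK : 0 ≤ K) (φ φ' : ℝ → E)
    (hφc : ContinuousOn φ (Ioc 0 tstar))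
    (hderiv : ∀ x ∈ Ioo 0 tstar, HasDerivAt φ (φ' x) x)
    (hinner : ∀ x ∈ Ioo 0 tstar, x * (inner ℝ (φ x) (φ' x) : ℝ)
      ≤ -‖φ x‖ ^ 2 + ‖φ x‖ * (K * x))
    (hlim : Tendsto (fun s => s * ‖φ s‖) (𝓝[>] (0:ℝ)) (𝓝 0)) :
    ∀ r ∈ Ioc 0 tstar, ‖φ r‖ ≤ K * r / 2 := by
  rintro r ⟨hr0, hr1⟩
  apply le_of_forall_pos_le_add
  intro ε hε
  set v : ℝ → ℝ := fun s => (inner ℝ (φ s) (φ s) : ℝ) + ε ^ 2 with hv_def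
  have hv : ∀ s, 0 < v s := fun s =>
    add_pos_of_nonneg_of_pos real_inner_self_nonneg (by positivity)
  have hnorm : ∀ s, ‖φ s‖ ≤ Real.sqrt (v s) := by
    intro s
    have h1 : Real.sqrt (‖φ s‖ ^ 2) ≤ Real.sqrt (v s) := by
      apply Real.sqrt_le_sqrt
      rw [hv_def]
      simp only [real_inner_self_eq_norm_sq]
      nlinarith
    rwa [Real.sqrt_sq (norm_nonneg _)] at h1
  have hεle : ∀ s, ε ≤ Real.sqrt (v s) := by
    intro s
    have h1 : Real.sqrt (ε ^ 2) ≤ Real.sqrt (v s) := by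
      apply Real.sqrt_le_sqrt
      have := real_inner_self_nonneg (F := E) (x := φ s)
      simp only [hv_def]
      nlinarith
    rwa [Real.sqrt_sq hε.le] at h1
  set f : ℝ → ℝ := fun s => s * Real.sqrt (v s) with hf_def
  set g : ℝ → ℝ := fun s => ε * s + K / 2 * s ^ 2 with hg_def
  have main : f r ≤ g r := by
    apply le_of_forall_pos_le_add
    intro δ hδ
    have h1 : ∀ᶠ s in 𝓝[>] (0:ℝ), s * ‖φ s‖ < δ / 4 :=
      hlim.eventually_lt_const (by positivity)
    have hmin : (0:ℝ) < min r (δ / (4 * (ε + 1))) := lt_min hr0 (by positivity)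
    have h2 : Ioo (0:ℝ) (min r (δ / (4 * (ε + 1)))) ∈ 𝓝[>] (0:ℝ) :=
      Ioo_mem_nhdsGT_of_mem ⟨le_rfl, hmin⟩
    obtain ⟨s₀, hs₁, hs₂⟩ := (h1.and (eventually_of_mem h2 (fun x hx => hx))).exists
    have hs₀r : s₀ < r := lt_of_lt_of_le hs₂.2 (min_le_left _ _)
    have hs₀0 : 0 < s₀ := hs₂.1
    have hs₀small : s₀ < δ / (4 * (ε + 1)) := lt_of_lt_of_le hs₂.2 (min_le_right _ _)
    have hfs₀ : f s₀ ≤ δ / 2 := by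
      have hsq : Real.sqrt (v s₀) ≤ ‖φ s₀‖ + ε := by
        have h3 : Real.sqrt (v s₀) ≤ Real.sqrt ((‖φ s₀‖ + ε) ^ 2) := by
          apply Real.sqrt_le_sqrt
          simp only [hv_def, real_inner_self_eq_norm_sq]
          nlinarith [norm_nonneg (φ s₀)]
        rwa [Real.sqrt_sq (by positivity)] at h3
      have h4 : f s₀ ≤ s₀ * ‖φ s₀‖ + s₀ * ε := by
        have := mul_le_mul_of_nonneg_left hsq hs₀0.le
        simp only [hf_def]
        nlinarith
      have h5 : s₀ * ε ≤ δ / 4 := by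
        calc s₀ * ε ≤ s₀ * (ε + 1) := by nlinarith
          _ ≤ δ / (4 * (ε + 1)) * (ε + 1) := by nlinarith
          _ = δ / 4 := by field_simp
      linarith [hs₁.le]
    have hIccsub : Icc s₀ r ⊆ Ioc 0 tstar := fun x hx =>
      ⟨lt_of_lt_of_le hs₀0 hx.1, le_trans hx.2 hr1⟩
    have hIoosub : Ioo s₀ r ⊆ Ioo 0 tstar := fun x hx =>
      ⟨lt_trans hs₀0 hx.1, lt_of_lt_of_le hx.2 hr1⟩
    have hmono : f r - f s₀ ≤ g r - g s₀ := by
      apply deriv_mono_helper (f' := fun x => 1 * Real.sqrt (v x) +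
          x * (((inner ℝ (φ x) (φ' x) : ℝ) + (inner ℝ (φ' x) (φ x) : ℝ)) / (2 * Real.sqrt (v x))))
        (g' := fun x => ε + K * x) hs₀r.le
      · exact continuousOn_id.mul (Real.continuous_sqrt.comp_continuousOn
          (((hφc.mono hIccsub).inner (hφc.mono hIccsub)).add continuousOn_const))
      · exact ((continuous_const.mul continuous_id).add
          (continuous_const.mul (continuous_pow 2))).continuousOn
      · intro x hx
        have hx' := hIoosub hx
        exact (hasDerivAt_id x).mul
          (((HasDerivAt.inner ℝ (hderiv x hx') (hderiv x hx')).add_const (ε ^ 2)).sqrt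
            (ne_of_gt (hv x)))
      · intro x _
        have h := ((hasDerivAt_id x).const_mul ε).add ((hasDerivAt_pow 2 x).const_mul (K / 2))
        refine h.congr_deriv ?_
        push_cast
        ring
      · intro x hx
        have hx' := hIoosub hx
        have hx0 : 0 < x := hx'.1
        set w := Real.sqrt (v x) with hw_def
        have hw : 0 < w := Real.sqrt_pos.2 (hv x)
        have hw2 : w ^ 2 = v x := Real.sq_sqrt (hv x).le
        have hP : x * ((inner ℝ (φ x) (φ' x) : ℝ) + (inner ℝ (φ' x) (φ x) : ℝ))
            ≤ 2 * (-‖φ x‖ ^ 2 + ‖φ x‖ * (K * x)) := by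
          have h6 := hinner x hx'
          have h7 : (inner ℝ (φ' x) (φ x) : ℝ) = (inner ℝ (φ x) (φ' x) : ℝ) := real_inner_comm _ _
          rw [h7]
          nlinarith
        have hφw := hnorm x
        have hεw := hεle x
        have hdiv : x * (((inner ℝ (φ x) (φ' x) : ℝ) + (inner ℝ (φ' x) (φ x) : ℝ))
            / (2 * w)) ≤ ε + K * x - w := by
          rw [mul_div_assoc']
          rw [div_le_iff₀ (by positivity)]
          have hvx : v x = ‖φ x‖ ^ 2 + ε ^ 2 := by
            simp only [hv_def, real_inner_self_eq_norm_sq]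
          have hw2' : w ^ 2 = ‖φ x‖ ^ 2 + ε ^ 2 := by rw [hw2, hvx]
          have m1 : 0 ≤ K * x * (w - ‖φ x‖) :=
            mul_nonneg (mul_nonneg hK hx0.le) (sub_nonneg.2 hφw)
          have m2 : 0 ≤ ε * (w - ε) := mul_nonneg hε.le (sub_nonneg.2 hεw)
          nlinarith [hP, m1, m2, hw2']
        linarith
    have hgs₀ : 0 ≤ g s₀ := by
      simp only [hg_def]
      positivity
    linarith
  have hfin : Real.sqrt (v r) ≤ ε + K / 2 * r := by
    have h8 : r * Real.sqrt (v r) ≤ r * (ε + K / 2 * r) := by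
      calc r * Real.sqrt (v r) = f r := rfl
        _ ≤ g r := main
        _ = r * (ε + K / 2 * r) := by simp only [hg_def]; ring
    exact le_of_mul_le_mul_left h8 hr0
  calc ‖φ r‖ ≤ Real.sqrt (v r) := hnorm r
    _ ≤ ε + K / 2 * r := hfin
    _ = K * r / 2 + ε := by ring

end Energy

/-- `C¹ → C²` bound for the singular linear solution operator: if `F` is continuously
differentiable and `μ'(t) = (1/t) L μ(t) + F(t)` on `(0, t*]` with `μ(0) = 0`, then `μ` is
twice differentiable on `(0, t*]` and
`sup |μ| + sup |μ'| + sup |μ''| ≤ 600 (sup |F| + sup |F'|)`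
(the sum of sups is stated in the equivalent pairwise form). -/
theorem singular_linear_C1_C2_bound
    (d₁ d₂ : ℕ) (hd₁ : 2 ≤ d₁) (hd₂ : d₂ = 2 ∨ d₂ = 9)
    (tstar : ℝ) (h0 : 0 < tstar) (h1 : tstar ≤ 1.5)
    (F F' μ μ' : ℝ → EuclideanSpace ℝ (Fin 5))
    (hFderiv : ∀ t ∈ Set.Icc 0 tstar, HasDerivWithinAt F (F' t) (Set.Icc 0 tstar) t)
    (hF'c : ContinuousOn F' (Set.Icc 0 tstar))
    (hμc : ContinuousOn μ (Set.Icc 0 tstar)) (hμ0 : μ 0 = 0)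
    (hderiv : ∀ t ∈ Set.Ioc 0 tstar, HasDerivWithinAt μ (μ' t) (Set.Icc 0 tstar) t)
    (hode : ∀ t ∈ Set.Ioc 0 tstar, μ' t = (1/t) • Lop d₁ d₂ (μ t) + F t) :
    ∃ μ'' : ℝ → EuclideanSpace ℝ (Fin 5),
      (∀ t ∈ Set.Ioc 0 tstar, HasDerivWithinAt μ' (μ'' t) (Set.Ioc 0 tstar) t) ∧
      ∀ t ∈ Set.Icc (0:ℝ) tstar, ∀ s ∈ Set.Ioc (0:ℝ) tstar, ∀ r ∈ Set.Ioc (0:ℝ) tstar,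
        ‖μ t‖ + ‖μ' s‖ + ‖μ'' r‖
          ≤ 600 * ((⨆ u : Set.Icc (0:ℝ) tstar, ‖F u‖)
            + ⨆ u : Set.Icc (0:ℝ) tstar, ‖F' u‖) := by
  have hd2l : (2:ℝ) ≤ (d₂:ℝ) := by rcases hd₂ with h | h <;> simp [h] <;> norm_num
  have hd2u : ((d₂:ℝ)) ≤ 9 := by rcases hd₂ with h | h <;> simp [h] <;> norm_num
  set M : ℝ := ⨆ u : Set.Icc (0:ℝ) tstar, ‖F u‖ with hM_def
  set M' : ℝ := ⨆ u : Set.Icc (0:ℝ) tstar, ‖F' u‖ with hM'_def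
  have h0mem : (0:ℝ) ∈ Icc (0:ℝ) tstar := ⟨le_rfl, h0.le⟩
  have hFc : ContinuousOn F (Icc 0 tstar) := fun x hx => (hFderiv x hx).continuousWithinAt
  -- boundedness of the sups
  have hMb : BddAbove (range fun u : Icc (0:ℝ) tstar => ‖F u‖) := by
    obtain ⟨C, hC⟩ := isCompact_Icc.exists_bound_of_continuousOn hFc
    exact ⟨C, by rintro y ⟨u, rfl⟩; exact hC u u.2⟩
  have hM'b : BddAbove (range fun u : Icc (0:ℝ) tstar => ‖F' u‖) := by
    obtain ⟨C, hC⟩ := isCompact_Icc.exists_bound_of_continuousOn hF'c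
    exact ⟨C, by rintro y ⟨u, rfl⟩; exact hC u u.2⟩
  have hFM : ∀ x ∈ Icc (0:ℝ) tstar, ‖F x‖ ≤ M := fun x hx => le_ciSup hMb ⟨x, hx⟩
  have hF'M : ∀ x ∈ Icc (0:ℝ) tstar, ‖F' x‖ ≤ M' := fun x hx => le_ciSup hM'b ⟨x, hx⟩
  have hM0 : 0 ≤ M := le_trans (norm_nonneg _) (hFM 0 h0mem)
  have hM'0 : 0 ≤ M' := le_trans (norm_nonneg _) (hF'M 0 h0mem)
  -- mean value bound on F
  have hFsub : ∀ x ∈ Icc (0:ℝ) tstar, ‖F x - F 0‖ ≤ M' * x := by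
    intro x hx
    have := norm_image_sub_le_of_norm_deriv_le_segment' hFderiv
      (fun y hy => hF'M y (Ico_subset_Icc_self hy)) x hx
    simpa using this
  -- derivative of μ as HasDerivAt on the open interval
  have hμDA : ∀ x ∈ Ioo (0:ℝ) tstar, HasDerivAt μ (μ' x) x := fun x hx =>
    (hderiv x ⟨hx.1, hx.2.le⟩).hasDerivAt (Icc_mem_nhds hx.1 hx.2)
  -- Step A : ‖μ t‖ ≤ M * t
  have hμb : ∀ t ∈ Ioc (0:ℝ) tstar, ‖μ t‖ ≤ M * t := by
    apply energy_bound tstar M hM0 μ μ' hμc hμ0 hμDA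
    intro x hx
    rw [hode x ⟨hx.1, hx.2.le⟩, inner_add_right, real_inner_smul_right]
    have h1 : (1/x) * (inner ℝ (μ x) (Lop d₁ d₂ (μ x)) : ℝ) ≤ 0 :=
      mul_nonpos_of_nonneg_of_nonpos (le_of_lt (one_div_pos.mpr hx.1))
        (inner_Lop d₁ d₂ hd2l (μ x))
    have h2 : (inner ℝ (μ x) (F x) : ℝ) ≤ ‖μ x‖ * ‖F x‖ := real_inner_le_norm _ _
    have h3 : ‖μ x‖ * ‖F x‖ ≤ ‖μ x‖ * M :=
      mul_le_mul_of_nonneg_left (hFM x ⟨hx.1.le, hx.2.le⟩) (norm_nonneg _)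
    linarith
  -- Step B : ‖μ' s‖ ≤ 11 * M
  have hμ'b : ∀ s ∈ Ioc (0:ℝ) tstar, ‖μ' s‖ ≤ 11 * M := by
    rintro s hs
    rw [hode s hs]
    have h1 : ‖(1/s) • Lop d₁ d₂ (μ s)‖ ≤ 10 * M := by
      rw [norm_smul, Real.norm_eq_abs, abs_of_pos (one_div_pos.mpr hs.1)]
      have h2 : ‖Lop d₁ d₂ (μ s)‖ ≤ 10 * (M * s) :=
        le_trans (Lop_norm d₁ d₂ hd2u (μ s))
          (by nlinarith [hμb s hs, norm_nonneg (μ s)])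
      have hs0 : s ≠ 0 := ne_of_gt hs.1
      calc (1/s) * ‖Lop d₁ d₂ (μ s)‖ ≤ (1/s) * (10 * (M * s)) := by
            apply mul_le_mul_of_nonneg_left h2 (le_of_lt (one_div_pos.mpr hs.1))
        _ = 10 * M := by field_simp
    calc ‖(1/s) • Lop d₁ d₂ (μ s) + F s‖ ≤ ‖(1/s) • Lop d₁ d₂ (μ s)‖ + ‖F s‖ := norm_add_le _ _
      _ ≤ 10 * M + M := add_le_add h1 (hFM s ⟨hs.1.le, hs.2⟩)
      _ = 11 * M := by ring
  -- Step C : the auxiliary function φ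
  set c : EuclideanSpace ℝ (Fin 5) := Lop d₁ d₂ (avec d₂ (F 0)) with hc_def
  have hkey : LL d₁ d₂ c - c + LL d₁ d₂ (F 0) = 0 := by
    have h := avec_eq d₁ d₂ (F 0)
    have h2 : LL d₁ d₂ (c - avec d₂ (F 0) + F 0) = 0 := by
      show LL d₁ d₂ (Lop d₁ d₂ (avec d₂ (F 0)) - avec d₂ (F 0) + F 0) = 0
      rw [h]; exact map_zero _
    rw [map_add, map_sub] at h2
    exact h2
  have hkey' : LL d₁ d₂ c = c - LL d₁ d₂ (F 0) := by
    have h3 : LL d₁ d₂ c - (c - LL d₁ d₂ (F 0)) = 0 := by rw [← hkey]; abel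
    exact sub_eq_zero.mp h3
  set φ : ℝ → EuclideanSpace ℝ (Fin 5) := fun s => s⁻¹ • LL d₁ d₂ (μ s) - c with hφ_def
  set φD : ℝ → EuclideanSpace ℝ (Fin 5) :=
    fun x => x⁻¹ • LL d₁ d₂ (μ' x) + (-(x^2)⁻¹) • LL d₁ d₂ (μ x) with hφD_def
  have hφd : ∀ x ∈ Ioo (0:ℝ) tstar, HasDerivAt φ (φD x) x := by
    intro x hx
    exact ((hasDerivAt_inv (ne_of_gt hx.1)).smul
      ((LL d₁ d₂).hasFDerivAt.comp_hasDerivAt x (hμDA x hx))).sub_const c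
  have hφode : ∀ x ∈ Ioc (0:ℝ) tstar,
      φD x = x⁻¹ • (LL d₁ d₂ (φ x) - φ x) + x⁻¹ • LL d₁ d₂ (F x - F 0) := by
    intro x hx
    have hμ'x : μ' x = x⁻¹ • LL d₁ d₂ (μ x) + F x := by
      rw [hode x hx, one_div, LL_apply]
    have hx2 : ((x:ℝ)^2)⁻¹ = x⁻¹ * x⁻¹ := by rw [sq, mul_inv]
    simp only [hφD_def, hφ_def, hμ'x, map_add, map_smul, map_sub, hkey', hx2]
    module
  have hφc : ContinuousOn φ (Ioc (0:ℝ) tstar) := by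
    apply ContinuousOn.sub _ continuousOn_const
    apply ContinuousOn.fun_smul
    · exact continuousOn_id.inv₀ (fun s hs => ne_of_gt hs.1)
    · exact (LL d₁ d₂).continuous.comp_continuousOn (hμc.mono Ioc_subset_Icc_self)
  have hφinner : ∀ x ∈ Ioo (0:ℝ) tstar,
      x * (inner ℝ (φ x) (φD x) : ℝ) ≤ -‖φ x‖ ^ 2 + ‖φ x‖ * ((10 * M') * x) := by
    intro x hx
    rw [hφode x ⟨hx.1, hx.2.le⟩, inner_add_right, real_inner_smul_right, real_inner_smul_right]
    have hx0 : (0:ℝ) < x := hx.1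
    have hxinv : x * x⁻¹ = 1 := mul_inv_cancel₀ (ne_of_gt hx0)
    have h1 : (inner ℝ (φ x) (LL d₁ d₂ (φ x) - φ x) : ℝ) ≤ -‖φ x‖ ^ 2 := by
      rw [inner_sub_right, real_inner_self_eq_norm_sq]
      have := inner_Lop d₁ d₂ hd2l (φ x)
      rw [LL_apply]
      linarith
    have h2 : (inner ℝ (φ x) (LL d₁ d₂ (F x - F 0)) : ℝ) ≤ ‖φ x‖ * (10 * (M' * x)) := by
      calc (inner ℝ (φ x) (LL d₁ d₂ (F x - F 0)) : ℝ)
          ≤ ‖φ x‖ * ‖LL d₁ d₂ (F x - F 0)‖ := real_inner_le_norm _ _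
        _ ≤ ‖φ x‖ * (10 * (M' * x)) := by
            apply mul_le_mul_of_nonneg_left _ (norm_nonneg _)
            rw [LL_apply]
            calc ‖Lop d₁ d₂ (F x - F 0)‖ ≤ 10 * ‖F x - F 0‖ := Lop_norm d₁ d₂ hd2u _
              _ ≤ 10 * (M' * x) := by
                  have := hFsub x ⟨hx0.le, hx.2.le⟩
                  linarith
    calc x * (x⁻¹ * (inner ℝ (φ x) (LL d₁ d₂ (φ x) - φ x) : ℝ)
          + x⁻¹ * (inner ℝ (φ x) (LL d₁ d₂ (F x - F 0)) : ℝ))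
        = (x * x⁻¹) * ((inner ℝ (φ x) (LL d₁ d₂ (φ x) - φ x) : ℝ)
          + (inner ℝ (φ x) (LL d₁ d₂ (F x - F 0)) : ℝ)) := by ring
      _ = (inner ℝ (φ x) (LL d₁ d₂ (φ x) - φ x) : ℝ)
          + (inner ℝ (φ x) (LL d₁ d₂ (F x - F 0)) : ℝ) := by rw [hxinv]; ring
      _ ≤ -‖φ x‖ ^ 2 + ‖φ x‖ * ((10 * M') * x) := by
          have := add_le_add h1 h2
          calc (inner ℝ (φ x) (LL d₁ d₂ (φ x) - φ x) : ℝ)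
              + (inner ℝ (φ x) (LL d₁ d₂ (F x - F 0)) : ℝ)
              ≤ -‖φ x‖ ^ 2 + ‖φ x‖ * (10 * (M' * x)) := this
            _ = -‖φ x‖ ^ 2 + ‖φ x‖ * ((10 * M') * x) := by ring
  have hφlim : Tendsto (fun s => s * ‖φ s‖) (𝓝[>] (0:ℝ)) (𝓝 0) := by
    have hle : 𝓝[>] (0:ℝ) ≤ 𝓝[Icc (0:ℝ) tstar] 0 :=
      nhdsWithin_le_iff.mpr (mem_of_superset
        (Ioc_mem_nhdsGT_of_mem ⟨le_rfl, h0⟩) Ioc_subset_Icc_self)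
    have hμt : Tendsto μ (𝓝[>] (0:ℝ)) (𝓝 0) := by
      have := (hμc 0 h0mem).tendsto
      rw [hμ0] at this
      exact this.mono_left hle
    have hbound : Tendsto (fun s => 10 * ‖μ s‖ + s * ‖c‖) (𝓝[>] (0:ℝ)) (𝓝 0) := by
      have hA : Tendsto (fun s => 10 * ‖μ s‖) (𝓝[>] (0:ℝ)) (𝓝 (10 * ‖(0:EuclideanSpace ℝ (Fin 5))‖)) :=
        (hμt.norm).const_mul 10
      have hB : Tendsto (fun s : ℝ => s * ‖c‖) (𝓝[>] (0:ℝ)) (𝓝 (0 * ‖c‖)) :=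
        (tendsto_id.mono_left nhdsWithin_le_nhds).mul_const ‖c‖
      have := hA.add hB
      simpa using this
    apply squeeze_zero' (by
      filter_upwards [self_mem_nhdsWithin] with s hs
      exact mul_nonneg (le_of_lt hs) (norm_nonneg _))
    · filter_upwards [Ioc_mem_nhdsGT_of_mem (⟨le_rfl, h0⟩ : (0:ℝ) ∈ Ico (0:ℝ) tstar)] with s hs
      have hs0 : (0:ℝ) < s := hs.1
      have h4 : ‖φ s‖ ≤ s⁻¹ * ‖LL d₁ d₂ (μ s)‖ + ‖c‖ := by
        calc ‖φ s‖ ≤ ‖s⁻¹ • LL d₁ d₂ (μ s)‖ + ‖c‖ := norm_sub_le _ _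
          _ = s⁻¹ * ‖LL d₁ d₂ (μ s)‖ + ‖c‖ := by
              rw [norm_smul, Real.norm_eq_abs, abs_of_pos (inv_pos.mpr hs0)]
      calc s * ‖φ s‖ ≤ s * (s⁻¹ * ‖LL d₁ d₂ (μ s)‖ + ‖c‖) :=
            mul_le_mul_of_nonneg_left h4 hs0.le
        _ = (s * s⁻¹) * ‖LL d₁ d₂ (μ s)‖ + s * ‖c‖ := by ring
        _ = ‖LL d₁ d₂ (μ s)‖ + s * ‖c‖ := by rw [mul_inv_cancel₀ (ne_of_gt hs0)]; ring
        _ ≤ 10 * ‖μ s‖ + s * ‖c‖ := by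
            have := Lop_norm d₁ d₂ hd2u (μ s)
            rw [LL_apply]
            linarith
    · exact hbound
  have hφb : ∀ r ∈ Ioc (0:ℝ) tstar, ‖φ r‖ ≤ (10 * M') * r / 2 :=
    energy_bound2 tstar (10 * M') (by positivity) φ φD hφc hφd hφinner hφlim
  -- Step D : define μ'' and conclude
  refine ⟨fun r => φD r + F' r, ?_, ?_⟩
  · intro r hr
    have hg : HasDerivWithinAt (fun t => t⁻¹ • LL d₁ d₂ (μ t) + F t)
        (φD r + F' r) (Ioc 0 tstar) r :=
      (((hasDerivAt_inv (ne_of_gt hr.1)).hasDerivWithinAt).smul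
        ((LL d₁ d₂).hasFDerivAt.comp_hasDerivWithinAt r
          ((hderiv r hr).mono Ioc_subset_Icc_self))).add
        ((hFderiv r (Ioc_subset_Icc_self hr)).mono Ioc_subset_Icc_self)
    exact hg.congr (fun y hy => by rw [hode y hy, one_div, LL_apply])
      (by rw [hode r hr, one_div, LL_apply])
  · intro t ht s hs r hr
    -- bound on ‖μ t‖
    have hμt : ‖μ t‖ ≤ 1.5 * M := by
      rcases eq_or_lt_of_le ht.1 with h | h
      · rw [← h, hμ0, norm_zero]
        linarith
      · calc ‖μ t‖ ≤ M * t := hμb t ⟨h, ht.2⟩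
          _ ≤ M * 1.5 := mul_le_mul_of_nonneg_left (le_trans ht.2 h1) hM0
          _ = 1.5 * M := by ring
    -- bound on ‖μ'' r‖
    have hr0 : (0:ℝ) < r := hr.1
    have hμ''r : ‖φD r + F' r‖ ≤ 66 * M' := by
      rw [hφode r hr]
      have hφr : ‖φ r‖ ≤ 5 * M' * r := by
        have := hφb r hr
        linarith
      have e1 : ‖r⁻¹ • (LL d₁ d₂ (φ r) - φ r)‖ ≤ 55 * M' := by
        rw [norm_smul, Real.norm_eq_abs, abs_of_pos (inv_pos.mpr hr0)]
        have h5 : ‖LL d₁ d₂ (φ r) - φ r‖ ≤ 11 * (5 * M' * r) := by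
          calc ‖LL d₁ d₂ (φ r) - φ r‖ ≤ ‖LL d₁ d₂ (φ r)‖ + ‖φ r‖ := norm_sub_le _ _
            _ ≤ 10 * ‖φ r‖ + ‖φ r‖ := by
                have := Lop_norm d₁ d₂ hd2u (φ r)
                rw [LL_apply]; linarith
            _ = 11 * ‖φ r‖ := by ring
            _ ≤ 11 * (5 * M' * r) := by linarith
        calc r⁻¹ * ‖LL d₁ d₂ (φ r) - φ r‖ ≤ r⁻¹ * (11 * (5 * M' * r)) :=
              mul_le_mul_of_nonneg_left h5 (inv_pos.mpr hr0).le
          _ = (r⁻¹ * r) * (55 * M') := by ring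
          _ = 55 * M' := by rw [inv_mul_cancel₀ (ne_of_gt hr0)]; ring
      have e2 : ‖r⁻¹ • LL d₁ d₂ (F r - F 0)‖ ≤ 10 * M' := by
        rw [norm_smul, Real.norm_eq_abs, abs_of_pos (inv_pos.mpr hr0)]
        have h6 : ‖LL d₁ d₂ (F r - F 0)‖ ≤ 10 * (M' * r) := by
          rw [LL_apply]
          calc ‖Lop d₁ d₂ (F r - F 0)‖ ≤ 10 * ‖F r - F 0‖ := Lop_norm d₁ d₂ hd2u _
            _ ≤ 10 * (M' * r) := by
                have := hFsub r ⟨hr0.le, hr.2⟩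
                linarith
        calc r⁻¹ * ‖LL d₁ d₂ (F r - F 0)‖ ≤ r⁻¹ * (10 * (M' * r)) :=
              mul_le_mul_of_nonneg_left h6 (inv_pos.mpr hr0).le
          _ = (r⁻¹ * r) * (10 * M') := by ring
          _ = 10 * M' := by rw [inv_mul_cancel₀ (ne_of_gt hr0)]; ring
      have e3 : ‖F' r‖ ≤ M' := hF'M r ⟨hr0.le, hr.2⟩
      calc ‖r⁻¹ • (LL d₁ d₂ (φ r) - φ r) + r⁻¹ • LL d₁ d₂ (F r - F 0) + F' r‖
          ≤ ‖r⁻¹ • (LL d₁ d₂ (φ r) - φ r) + r⁻¹ • LL d₁ d₂ (F r - F 0)‖ + ‖F' r‖ :=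
            norm_add_le _ _
        _ ≤ (‖r⁻¹ • (LL d₁ d₂ (φ r) - φ r)‖ + ‖r⁻¹ • LL d₁ d₂ (F r - F 0)‖) + ‖F' r‖ :=
            add_le_add (norm_add_le _ _) le_rfl
        _ ≤ (55 * M' + 10 * M') + M' := by
            apply add_le_add (add_le_add e1 e2) e3
        _ = 66 * M' := by ring
    have := hμ'b s hs
    -- final arithmetic
    have hgoal : ‖μ t‖ + ‖μ' s‖ + ‖φD r + F' r‖ ≤ 600 * (M + M') := by
      have h15 : (1.5 : ℝ) * M + 11 * M + 66 * M' ≤ 600 * (M + M') := by nlinarith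
      linarith
    exact hgoal
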